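/- Let X and Y be Banach spaces and let f : X → Y be strictly differentiable at x̄. Then reg f(x̄ | f(x̄)) = reg ∇f(x̄), the modulus of metric regularity of the strict derivative ∇f(x̄) (taken at any point, by linearity). In particular, f is metrically regular at x̄ for f(x̄) if and only if the bounded linear operator ∇f(x̄) is surjective. -/

import Mathlib

open Metric Filter

open Topology NNReal

/-- The modulus of metric regularity `reg F(xbar|ybar)` (infimum of constants `κ` with
`d(x, F⁻¹(y)) ≤ κ d(y, F(x))` near `(xbar, ybar)`; `⊤` if no such constant exists,
so metric regularity means the modulus is finite). -/
noncomputable def regModulus {X Y : Type*} [NormedAddCommGroup X] [NormedAddCommGroup Y]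
    (F : X → Set Y) (xbar : X) (ybar : Y) : ENNReal :=
  ⨅ (κ : NNReal) (_ : ∃ ε > (0 : ℝ), ∀ x ∈ ball xbar ε, ∀ y ∈ ball ybar ε,
      EMetric.infEdist x {x' | y ∈ F x'} ≤ (κ : ENNReal) * EMetric.infEdist y (F x)),
    (κ : ENNReal)

set_option linter.unusedSectionVars false


theorem iterate_solve {X Y : Type*} [NormedAddCommGroup X] [NormedSpace ℝ X] [CompleteSpace X]
    [NormedAddCommGroup Y] [NormedSpace ℝ Y]
    (B : X →L[ℝ] Y) {K δ : ℝ} (hK : 0 ≤ K) (hδ0 : 0 ≤ δ) (hδ1 : δ < 1)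
    (H : ∀ y : Y, ∃ u : X, ‖u‖ ≤ K * ‖y‖ ∧ ‖y - B u‖ ≤ δ * ‖y‖) :
    ∀ y : Y, ∃ u : X, B u = y ∧ ‖u‖ ≤ K / (1 - δ) * ‖y‖ := by
  intro y
  choose g hg1 hg2 using H
  set r : ℕ → Y := fun n => (fun z => z - B (g z))^[n] y with hr
  have hrsucc : ∀ n, r (n + 1) = r n - B (g (r n)) := by
    intro n
    simp [hr, Function.iterate_succ_apply']
  have hrn : ∀ n, ‖r n‖ ≤ δ ^ n * ‖y‖ := by
    intro n
    induction n with
    | zero => simp [hr]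
    | succ n ih =>
      rw [hrsucc]
      calc ‖r n - B (g (r n))‖ ≤ δ * ‖r n‖ := hg2 _
        _ ≤ δ * (δ ^ n * ‖y‖) := by
            exact mul_le_mul_of_nonneg_left ih hδ0
        _ = δ ^ (n + 1) * ‖y‖ := by ring
  have hgb : ∀ n, ‖g (r n)‖ ≤ K * ‖y‖ * δ ^ n := by
    intro n
    calc ‖g (r n)‖ ≤ K * ‖r n‖ := hg1 _
      _ ≤ K * (δ ^ n * ‖y‖) := mul_le_mul_of_nonneg_left (hrn n) hK
      _ = K * ‖y‖ * δ ^ n := by ring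
  have hsumgeo : Summable (fun n : ℕ => K * ‖y‖ * δ ^ n) :=
    (summable_geometric_of_lt_one hδ0 hδ1).mul_left _
  have hsum : Summable (fun n => g (r n)) :=
    Summable.of_norm_bounded hsumgeo hgb
  refine ⟨∑' n, g (r n), ?_, ?_⟩
  · -- B of the sum equals y
    have h1 : Tendsto (fun n => ∑ k ∈ Finset.range n, g (r k)) atTop (𝓝 (∑' n, g (r n))) :=
      hsum.hasSum.tendsto_sum_nat
    have h2 : Tendsto (fun n => B (∑ k ∈ Finset.range n, g (r k))) atTop
        (𝓝 (B (∑' n, g (r n)))) := (B.continuous.tendsto _).comp h1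
    have h3 : ∀ n, B (∑ k ∈ Finset.range n, g (r k)) = y - r n := by
      intro n
      rw [map_sum]
      have : ∀ k, B (g (r k)) = r k - r (k + 1) := by
        intro k; rw [hrsucc]; abel
      simp_rw [this]
      rw [Finset.sum_range_sub' r]
      simp [hr]
    simp_rw [h3] at h2
    have h4 : Tendsto r atTop (𝓝 0) := by
      have : Tendsto (fun n : ℕ => δ ^ n * ‖y‖) atTop (𝓝 0) := by
        simpa using (tendsto_pow_atTop_nhds_zero_of_lt_one hδ0 hδ1).mul_const ‖y‖
      exact squeeze_zero_norm hrn this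
    have h5 : Tendsto (fun n => y - r n) atTop (𝓝 (y - 0)) :=
      tendsto_const_nhds.sub h4
    rw [sub_zero] at h5
    exact tendsto_nhds_unique h2 h5
  · calc ‖∑' n, g (r n)‖ ≤ ∑' n, K * ‖y‖ * δ ^ n := tsum_of_norm_bounded hsumgeo.hasSum hgb
      _ = K * ‖y‖ * (1 - δ)⁻¹ := by rw [_root_.tsum_mul_left, tsum_geometric_of_lt_one hδ0 hδ1]
      _ = K / (1 - δ) * ‖y‖ := by ring

theorem solve_of_regF {X Y : Type*} [NormedAddCommGroup X] [NormedSpace ℝ X] [CompleteSpace X]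
    [NormedAddCommGroup Y] [NormedSpace ℝ Y]
    (f : X → Y) (xbar : X) (B : X →L[ℝ] Y) (hf : HasStrictFDerivAt f B xbar)
    {κ κ' : ℝ≥0} (hκκ' : κ < κ')
    (hreg : ∃ ε > (0 : ℝ), ∀ x ∈ ball xbar ε, ∀ y ∈ ball (f xbar) ε,
      EMetric.infEdist x {x' | y ∈ ({f x'} : Set Y)} ≤ (κ : ENNReal) * EMetric.infEdist y {f x}) :
    ∀ y : Y, ∃ u : X, B u = y ∧ ‖u‖ ≤ (κ' : ℝ) * ‖y‖ := by
  obtain ⟨ε₁, hε₁, hregf⟩ := hreg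
  set κ₁ : ℝ≥0 := (κ + κ') / 2 with hκ₁def
  have hκ'pos : (0 : ℝ≥0) < κ' := lt_of_le_of_lt zero_le hκκ'
  have hκκ₁ : κ < κ₁ := by
    rw [hκ₁def]
    rw [lt_div_iff₀ (by norm_num)]
    calc κ * 2 = κ + κ := by ring
      _ < κ + κ' := by exact add_lt_add_right hκκ' κ
  have hκ₁κ' : κ₁ < κ' := by
    rw [hκ₁def, div_lt_iff₀ (by norm_num)]
    calc κ + κ' < κ' + κ' := add_lt_add_left hκκ' κ'
      _ = κ' * 2 := by ring
  have hκ₁pos : (0 : ℝ≥0) < κ₁ := lt_of_le_of_lt zero_le hκκ₁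
  have hκ₁R : (0 : ℝ) < κ₁ := hκ₁pos
  have hκ'R : (0 : ℝ) < κ' := hκ'pos
  set cR : ℝ := (κ₁ : ℝ)⁻¹ - (κ' : ℝ)⁻¹ with hcRdef
  have hcRpos : 0 < cR := by
    rw [hcRdef]
    have : (κ' : ℝ)⁻¹ < (κ₁ : ℝ)⁻¹ := by
      apply inv_strictAnti₀ hκ₁R
      exact_mod_cast hκ₁κ'
    linarith
  set c : ℝ≥0 := cR.toNNReal with hcdef
  have hcR : (c : ℝ) = cR := Real.coe_toNNReal _ hcRpos.le
  have hcpos : (0 : ℝ≥0) < c := by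
    rw [← NNReal.coe_lt_coe, hcR]; exact hcRpos
  obtain ⟨s, hs, hA⟩ := hf.approximates_deriv_on_nhds (Or.inr hcpos)
  obtain ⟨ρ, hρ, hρs⟩ := Metric.mem_nhds_iff.mp hs
  -- approximate solvability
  have H : ∀ y : Y, ∃ u : X, ‖u‖ ≤ (κ₁ : ℝ) * ‖y‖ ∧ ‖y - B u‖ ≤ (cR * κ₁) * ‖y‖ := by
    intro y
    rcases eq_or_ne y 0 with rfl | hy
    · exact ⟨0, by simp, by simp [mul_nonneg (mul_nonneg hcRpos.le hκ₁R.le) (norm_nonneg _)]⟩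
    have hyn : (0 : ℝ) < ‖y‖ := norm_pos_iff.mpr hy
    set t : ℝ := min (ε₁ / (2 * ‖y‖)) (ρ / (((κ₁ : ℝ) + 1) * ‖y‖)) with htdef
    have ht : 0 < t := by
      apply lt_min
      · positivity
      · positivity
    have hty : t * ‖y‖ < ε₁ := by
      calc t * ‖y‖ ≤ ε₁ / (2 * ‖y‖) * ‖y‖ := by
            apply mul_le_mul_of_nonneg_right (min_le_left _ _) hyn.le
        _ = ε₁ / 2 := by field_simp
        _ < ε₁ := by linarith
    have htρ : (κ₁ : ℝ) * (t * ‖y‖) < ρ := by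
      calc (κ₁ : ℝ) * (t * ‖y‖) ≤ (κ₁ : ℝ) * (ρ / (((κ₁ : ℝ) + 1) * ‖y‖) * ‖y‖) := by
            apply mul_le_mul_of_nonneg_left _ hκ₁R.le
            exact mul_le_mul_of_nonneg_right (min_le_right _ _) hyn.le
        _ = ρ * ((κ₁ : ℝ) / ((κ₁ : ℝ) + 1)) := by field_simp
        _ < ρ * 1 := by
            apply mul_lt_mul_of_pos_left _ hρ
            rw [div_lt_one (by positivity)]; linarith
        _ = ρ := mul_one ρ
    -- target point
    set y' : Y := f xbar + t • y with hy'def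
    have hdy' : dist y' (f xbar) = t * ‖y‖ := by
      rw [hy'def, dist_eq_norm, add_sub_cancel_left, norm_smul, Real.norm_eq_abs,
        abs_of_pos ht]
    have hy'mem : y' ∈ ball (f xbar) ε₁ := by
      rw [mem_ball, hdy']; exact hty
    have hkey := hregf xbar (mem_ball_self hε₁) y' hy'mem
    have hsing : EMetric.infEdist y' {f xbar} = ENNReal.ofReal (t * ‖y‖) := by
      rw [show @EMetric.infEdist = @Metric.infEDist from rfl, Metric.infEDist_singleton, edist_dist, hdy']
    have hlt : EMetric.infEdist xbar {x' | y' ∈ ({f x'} : Set Y)}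
        < ENNReal.ofReal ((κ₁ : ℝ) * (t * ‖y‖)) := by
      apply lt_of_le_of_lt hkey
      rw [hsing]
      have hrhs : ENNReal.ofReal ((κ₁ : ℝ) * (t * ‖y‖))
          = (κ₁ : ENNReal) * ENNReal.ofReal (t * ‖y‖) := by
        rw [ENNReal.ofReal_mul (by positivity), ENNReal.ofReal_coe_nnreal]
      rw [hrhs]
      have h0 : ENNReal.ofReal (t * ‖y‖) ≠ 0 :=
        (ENNReal.ofReal_pos.mpr (by positivity)).ne'
      exact ENNReal.mul_lt_mul_left h0 ENNReal.ofReal_ne_top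
        (ENNReal.coe_lt_coe.mpr hκκ₁)
    obtain ⟨x, hxmem, hxd⟩ := EMetric.infEdist_lt_iff.mp hlt
    have hfx : y' = f x := hxmem
    have hxd' : dist xbar x < (κ₁ : ℝ) * (t * ‖y‖) := by
      rw [edist_dist] at hxd
      exact (ENNReal.ofReal_lt_ofReal_iff (by positivity)).mp hxd
    have hxball : x ∈ ball xbar ρ := by
      rw [mem_ball, dist_comm]
      exact hxd'.trans htρ
    have hxs : x ∈ s := hρs hxball
    have hxbars : xbar ∈ s := hρs (mem_ball_self hρ)
    have happrox := hA x hxs xbar hxbars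
    have hfd : f x - f xbar = t • y := by
      rw [← hfx, hy'def]; abel
    rw [hfd] at happrox
    refine ⟨t⁻¹ • (x - xbar), ?_, ?_⟩
    · rw [norm_smul, Real.norm_eq_abs, abs_of_pos (inv_pos.mpr ht)]
      have hnx : ‖x - xbar‖ ≤ (κ₁ : ℝ) * (t * ‖y‖) := by
        rw [← dist_eq_norm, dist_comm]; exact hxd'.le
      calc t⁻¹ * ‖x - xbar‖ ≤ t⁻¹ * ((κ₁ : ℝ) * (t * ‖y‖)) :=
            mul_le_mul_of_nonneg_left hnx (inv_pos.mpr ht).le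
        _ = (κ₁ : ℝ) * ‖y‖ := by field_simp
    · have hBu : y - B (t⁻¹ • (x - xbar)) = t⁻¹ • (t • y - B (x - xbar)) := by
        rw [map_smul, smul_sub, smul_smul, inv_mul_cancel₀ ht.ne', one_smul]
      rw [hBu, norm_smul, Real.norm_eq_abs, abs_of_pos (inv_pos.mpr ht)]
      calc t⁻¹ * ‖t • y - B (x - xbar)‖ ≤ t⁻¹ * ((c : ℝ) * ‖x - xbar‖) := by
            exact mul_le_mul_of_nonneg_left happrox (inv_pos.mpr ht).le
        _ ≤ t⁻¹ * ((c : ℝ) * ((κ₁ : ℝ) * (t * ‖y‖))) := by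
            apply mul_le_mul_of_nonneg_left _ (inv_pos.mpr ht).le
            apply mul_le_mul_of_nonneg_left _ c.coe_nonneg
            rw [← dist_eq_norm, dist_comm]
            exact hxd'.le
        _ = cR * κ₁ * ‖y‖ := by rw [hcR]; field_simp
  -- iterate
  have hδ0 : 0 ≤ cR * (κ₁ : ℝ) := mul_nonneg hcRpos.le hκ₁R.le
  have hδval : cR * (κ₁ : ℝ) = 1 - (κ₁ : ℝ) / (κ' : ℝ) := by
    rw [hcRdef]; field_simp
  have hδ1 : cR * (κ₁ : ℝ) < 1 := by
    rw [hδval]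
    have : 0 < (κ₁ : ℝ) / (κ' : ℝ) := by positivity
    linarith
  have hfinal := iterate_solve B hκ₁R.le hδ0 hδ1 H
  have hconst : (κ₁ : ℝ) / (1 - cR * (κ₁ : ℝ)) = (κ' : ℝ) := by
    rw [hδval]
    have h1 : (κ₁ : ℝ) ≠ 0 := hκ₁R.ne'
    have h2 : (κ' : ℝ) ≠ 0 := hκ'R.ne'
    field_simp
    rw [sub_sub_cancel, div_self h1]
  intro y
  obtain ⟨u, hu1, hu2⟩ := hfinal y
  exact ⟨u, hu1, by rwa [hconst] at hu2⟩

-- From local metric regularity of B at 0 with constant κ, get global exact solvability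
theorem solve_of_regB {X Y : Type*} [NormedAddCommGroup X] [NormedSpace ℝ X]
    [NormedAddCommGroup Y] [NormedSpace ℝ Y]
    (B : X →L[ℝ] Y) {κ κ₁ : ℝ≥0} (hκκ₁ : κ < κ₁)
    (hcond : ∃ ε > (0 : ℝ), ∀ x ∈ ball (0 : X) ε, ∀ y ∈ ball (0 : Y) ε,
      EMetric.infEdist x {x' | y ∈ ({B x'} : Set Y)} ≤ (κ : ENNReal) * EMetric.infEdist y {B x}) :
    ∀ y : Y, ∃ u : X, B u = y ∧ ‖u‖ ≤ (κ₁ : ℝ) * ‖y‖ := by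
  obtain ⟨ε, hε, hc⟩ := hcond
  have hκ₁pos : (0 : ℝ) < κ₁ := lt_of_le_of_lt (κ.coe_nonneg) (by exact_mod_cast hκκ₁)
  intro y
  rcases eq_or_ne y 0 with rfl | hy
  · exact ⟨0, by simp, by simp⟩
  have hyn : (0 : ℝ) < ‖y‖ := norm_pos_iff.mpr hy
  set t : ℝ := ε / (2 * ‖y‖) with htdef
  have ht : 0 < t := by positivity
  have hmem : t • y ∈ ball (0 : Y) ε := by
    rw [mem_ball, dist_zero_right, norm_smul, Real.norm_eq_abs, abs_of_pos ht, htdef]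
    rw [div_mul_eq_mul_div, mul_comm]
    rw [mul_div_assoc]
    calc ‖y‖ * (ε / (2 * ‖y‖)) = ε / 2 := by field_simp
      _ < ε := by linarith
  have hkey := hc 0 (mem_ball_self hε) (t • y) hmem
  have hsing : EMetric.infEdist (t • y) {B 0} = ENNReal.ofReal (t * ‖y‖) := by
    rw [map_zero, show @EMetric.infEdist = @Metric.infEDist from rfl, Metric.infEDist_singleton, edist_dist, dist_zero_right, norm_smul,
      Real.norm_eq_abs, abs_of_pos ht]
  have hlt : EMetric.infEdist (0 : X) {x' | t • y ∈ ({B x'} : Set Y)}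
      < ENNReal.ofReal ((κ₁ : ℝ) * (t * ‖y‖)) := by
    apply lt_of_le_of_lt hkey
    rw [hsing]
    have hrhs : ENNReal.ofReal ((κ₁ : ℝ) * (t * ‖y‖))
        = (κ₁ : ENNReal) * ENNReal.ofReal (t * ‖y‖) := by
      rw [ENNReal.ofReal_mul (by positivity), ENNReal.ofReal_coe_nnreal]
    rw [hrhs]
    have h0 : ENNReal.ofReal (t * ‖y‖) ≠ 0 := (ENNReal.ofReal_pos.mpr (by positivity)).ne'
    exact ENNReal.mul_lt_mul_left h0 ENNReal.ofReal_ne_top (ENNReal.coe_lt_coe.mpr hκκ₁)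
  obtain ⟨z, hzmem, hzd⟩ := EMetric.infEdist_lt_iff.mp hlt
  have hBz : t • y = B z := hzmem
  have hzd' : ‖z‖ < (κ₁ : ℝ) * (t * ‖y‖) := by
    rw [edist_dist, dist_comm, dist_zero_right] at hzd
    exact (ENNReal.ofReal_lt_ofReal_iff (by positivity)).mp hzd
  refine ⟨t⁻¹ • z, ?_, ?_⟩
  · rw [map_smul, ← hBz, smul_smul, inv_mul_cancel₀ ht.ne', one_smul]
  · rw [norm_smul, Real.norm_eq_abs, abs_of_pos (inv_pos.mpr ht)]
    calc t⁻¹ * ‖z‖ ≤ t⁻¹ * ((κ₁ : ℝ) * (t * ‖y‖)) :=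
          mul_le_mul_of_nonneg_left hzd'.le (inv_pos.mpr ht).le
      _ = (κ₁ : ℝ) * ‖y‖ := by field_simp

-- From exact solvability of B with constant κ₁ < κ', get the f-regularity condition with κ'
theorem regF_of_solve {X Y : Type*} [NormedAddCommGroup X] [NormedSpace ℝ X] [CompleteSpace X]
    [NormedAddCommGroup Y] [NormedSpace ℝ Y]
    (f : X → Y) (xbar : X) (B : X →L[ℝ] Y) (hf : HasStrictFDerivAt f B xbar)
    {κ₁ κ' : ℝ≥0} (hκ₁pos : 0 < κ₁) (hκ₁κ' : κ₁ < κ')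
    (hsol : ∀ y : Y, ∃ u : X, B u = y ∧ ‖u‖ ≤ (κ₁ : ℝ) * ‖y‖) :
    ∃ ε > (0 : ℝ), ∀ x ∈ ball xbar ε, ∀ y ∈ ball (f xbar) ε,
      EMetric.infEdist x {x' | y ∈ ({f x'} : Set Y)}
        ≤ (κ' : ENNReal) * EMetric.infEdist y {f x} := by
  have hκ₁R : (0 : ℝ) < κ₁ := hκ₁pos
  have hκ'R : (0 : ℝ) < κ' := lt_trans hκ₁R (by exact_mod_cast hκ₁κ')
  choose g hg1 hg2 using hsol
  set f'symm : B.NonlinearRightInverse :=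
    ⟨g, κ₁, hg2, hg1⟩ with hf'symm
  set cR : ℝ := (κ₁ : ℝ)⁻¹ - (κ' : ℝ)⁻¹ with hcRdef
  have hcRpos : 0 < cR := by
    rw [hcRdef]
    have : (κ' : ℝ)⁻¹ < (κ₁ : ℝ)⁻¹ := by
      apply inv_strictAnti₀ hκ₁R
      exact_mod_cast hκ₁κ'
    linarith
  set c : ℝ≥0 := cR.toNNReal with hcdef
  have hcR : (c : ℝ) = cR := Real.coe_toNNReal _ hcRpos.le
  have hcpos : (0 : ℝ≥0) < c := by rw [← NNReal.coe_lt_coe, hcR]; exact hcRpos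
  obtain ⟨s, hs, hA⟩ := hf.approximates_deriv_on_nhds (Or.inr hcpos)
  obtain ⟨ρ, hρ, hρs⟩ := Metric.mem_nhds_iff.mp hs
  set M : ℝ := ‖B‖ + c with hMdef
  have hM : 0 ≤ M := by positivity
  set ε' : ℝ := ρ / (2 * ((κ' : ℝ) * (1 + M) + 1)) with hε'def
  have hε' : 0 < ε' := by positivity
  have hpos1 : (0:ℝ) ≤ (κ' : ℝ) * (1 + M) := by positivity
  have hε'ρ : ε' ≤ ρ / 2 := by
    rw [hε'def, div_le_div_iff₀ (by positivity) (by norm_num)]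
    nlinarith [hρ, hpos1]
  refine ⟨ε', hε', fun x hx y hy => ?_⟩
  have hxball : x ∈ ball xbar ρ := by
    rw [mem_ball] at hx ⊢
    calc dist x xbar < ε' := hx
      _ ≤ ρ / 2 := hε'ρ
      _ < ρ := by linarith
  have hxs : x ∈ s := hρs hxball
  have hxbars : xbar ∈ s := hρs (mem_ball_self hρ)
  -- Lipschitz-type bound on f near xbar
  have hfLip : dist (f x) (f xbar) ≤ M * dist x xbar := by
    have h1 := hA x hxs xbar hxbars
    rw [dist_eq_norm, dist_eq_norm]
    calc ‖f x - f xbar‖ = ‖(f x - f xbar - B (x - xbar)) + B (x - xbar)‖ := by abel_nf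
      _ ≤ ‖f x - f xbar - B (x - xbar)‖ + ‖B (x - xbar)‖ := norm_add_le _ _
      _ ≤ (c : ℝ) * ‖x - xbar‖ + ‖B‖ * ‖x - xbar‖ := add_le_add h1 (B.le_opNorm _)
      _ = M * ‖x - xbar‖ := by rw [hMdef]; ring
  set d : ℝ := dist y (f x) with hddef
  have hd0 : 0 ≤ d := dist_nonneg
  set r : ℝ := (κ' : ℝ) * d with hrdef
  have hr0 : 0 ≤ r := by positivity
  have hrbound : r + ε' ≤ ρ := by
    have hdb : d ≤ ε' + M * ε' := by
      calc d ≤ dist y (f xbar) + dist (f xbar) (f x) := dist_triangle _ _ _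
        _ ≤ ε' + M * dist x xbar := by
            apply add_le_add (le_of_lt (mem_ball.mp hy))
            rw [dist_comm (f xbar)]; exact hfLip
        _ ≤ ε' + M * ε' := by
            apply add_le_add_right
            exact mul_le_mul_of_nonneg_left (le_of_lt (mem_ball.mp hx)) hM
    calc r + ε' ≤ (κ' : ℝ) * (ε' + M * ε') + ε' := by
          apply add_le_add_left
          exact mul_le_mul_of_nonneg_left hdb hκ'R.le
      _ = ((κ' : ℝ) * (1 + M) + 1) * ε' := by ring
      _ = ρ / 2 := by
          have hden : (κ' : ℝ) * (1 + M) + 1 ≠ 0 := by positivity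
          rw [hε'def]; field_simp
      _ ≤ ρ := by linarith
  have hball : closedBall x r ⊆ s := by
    intro x' hx'
    apply hρs
    rw [mem_ball]
    calc dist x' xbar ≤ dist x' x + dist x xbar := dist_triangle _ _ _
      _ < r + ε' := by
          apply add_lt_add_of_le_of_lt (mem_closedBall.mp hx') (mem_ball.mp hx)
      _ ≤ ρ := hrbound
  have hsurj := hA.surjOn_closedBall_of_nonlinearRightInverse f'symm hr0 hball
  have hnninv : ((f'symm.nnnorm : ℝ)⁻¹ - (c : ℝ)) = (κ' : ℝ)⁻¹ := by
    have : (f'symm.nnnorm : ℝ) = (κ₁ : ℝ) := rfl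
    rw [this, hcR, hcRdef]; ring
  have hymem : y ∈ closedBall (f x) (((f'symm.nnnorm : ℝ)⁻¹ - (c : ℝ)) * r) := by
    rw [hnninv, mem_closedBall, hrdef]
    have heq : (κ' : ℝ)⁻¹ * ((κ' : ℝ) * d) = d := by field_simp
    rw [heq]
  obtain ⟨x', hx'ball, hx'eq⟩ := hsurj hymem
  have hfinal : EMetric.infEdist x {x' | y ∈ ({f x'} : Set Y)} ≤ ENNReal.ofReal r := by
    apply le_trans (EMetric.infEdist_le_edist_of_mem (show x' ∈ _ from hx'eq.symm))
    rw [edist_dist, dist_comm]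
    exact ENNReal.ofReal_le_ofReal (mem_closedBall.mp hx'ball)
  apply le_trans hfinal
  rw [show @EMetric.infEdist = @Metric.infEDist from rfl, Metric.infEDist_singleton, edist_dist, hrdef, ENNReal.ofReal_mul hκ'R.le,
    ENNReal.ofReal_coe_nnreal]

-- new pieces
theorem regB_of_solve {X Y : Type*} [NormedAddCommGroup X] [NormedSpace ℝ X]
    [NormedAddCommGroup Y] [NormedSpace ℝ Y] (B : X →L[ℝ] Y) {K : ℝ≥0}
    (hsol : ∀ y : Y, ∃ u : X, B u = y ∧ ‖u‖ ≤ (K : ℝ) * ‖y‖) :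
    ∃ ε > (0 : ℝ), ∀ x ∈ ball (0 : X) ε, ∀ y ∈ ball (0 : Y) ε,
      EMetric.infEdist x {x' | y ∈ ({B x'} : Set Y)}
        ≤ (K : ENNReal) * EMetric.infEdist y {B x} := by
  refine ⟨1, one_pos, fun x _ y _ => ?_⟩
  obtain ⟨u, hu1, hu2⟩ := hsol (y - B x)
  have hmem : x + u ∈ {x' | y ∈ ({B x'} : Set Y)} := by
    simp only [Set.mem_setOf_eq, Set.mem_singleton_iff, map_add, hu1]
    abel
  apply le_trans (EMetric.infEdist_le_edist_of_mem hmem)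
  rw [show @EMetric.infEdist = @Metric.infEDist from rfl, Metric.infEDist_singleton, edist_dist, edist_dist]
  have h1 : dist x (x + u) = ‖u‖ := by
    rw [dist_eq_norm]; simp
  rw [h1, dist_eq_norm]
  calc ENNReal.ofReal ‖u‖ ≤ ENNReal.ofReal ((K : ℝ) * ‖y - B x‖) :=
        ENNReal.ofReal_le_ofReal hu2
    _ = (K : ENNReal) * ENNReal.ofReal ‖y - B x‖ := by
        rw [ENNReal.ofReal_mul K.coe_nonneg, ENNReal.ofReal_coe_nnreal]


theorem nnreal_mid {κ r : ℝ≥0} (h : κ < r) :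
    κ < (κ + r) / 2 ∧ (κ + r) / 2 < r ∧ 0 < (κ + r) / 2 := by
  constructor
  · rw [lt_div_iff₀ (by norm_num : (0:ℝ≥0) < 2)]
    calc κ * 2 = κ + κ := by ring
      _ < κ + r := add_lt_add_right h κ
  constructor
  · rw [div_lt_iff₀ (by norm_num : (0:ℝ≥0) < 2)]
    calc κ + r < r + r := add_lt_add_left h r
      _ = r * 2 := by ring
  · have hr : 0 < r := lt_of_le_of_lt zero_le h
    positivity


/-- If `f` is strictly differentiable at `xbar`, then `reg f(xbar | f xbar)` equals the
modulus of metric regularity of the strict derivative `∇f(xbar)` (taken at the origin,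
by linearity); in particular, `f` is metrically regular at `xbar` for `f xbar` iff
`∇f(xbar)` is surjective. -/
theorem regModulus_eq_regModulus_strict_deriv
    {X Y : Type*} [NormedAddCommGroup X] [NormedSpace ℝ X] [CompleteSpace X]
    [NormedAddCommGroup Y] [NormedSpace ℝ Y] [CompleteSpace Y]
    (f : X → Y) (xbar : X) (B : X →L[ℝ] Y) (hf : HasStrictFDerivAt f B xbar) :
    regModulus (fun x => {f x}) xbar (f xbar) = regModulus (fun x => {B x}) 0 0 ∧
    (regModulus (fun x => {f x}) xbar (f xbar) < ⊤ ↔ Function.Surjective B) := by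
  have hFB : regModulus (fun x => {f x}) xbar (f xbar) ≤ regModulus (fun x => {B x}) 0 0 := by
    apply le_iInf₂
    intro κ hcond
    by_contra h
    push_neg at h
    obtain ⟨r, hκr, hrF⟩ := ENNReal.lt_iff_exists_nnreal_btwn.mp h
    rw [ENNReal.coe_lt_coe] at hκr
    obtain ⟨h1, h2, h3⟩ := nnreal_mid hκr
    have hsol := solve_of_regB B h1 hcond
    have hFcond := regF_of_solve f xbar B hf h3 h2 hsol
    have : regModulus (fun x => {f x}) xbar (f xbar) ≤ (r : ENNReal) :=
      iInf₂_le r hFcond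
    exact absurd (lt_of_le_of_lt this hrF) (lt_irrefl _)
  have hBF : regModulus (fun x => {B x}) 0 0 ≤ regModulus (fun x => {f x}) xbar (f xbar) := by
    apply le_iInf₂
    intro κ hcond
    by_contra h
    push_neg at h
    obtain ⟨r, hκr, hrB⟩ := ENNReal.lt_iff_exists_nnreal_btwn.mp h
    rw [ENNReal.coe_lt_coe] at hκr
    have hmap : f xbar ∈ ({f xbar} : Set Y) := rfl
    have hsol := solve_of_regF f xbar B hf hκr (by
      obtain ⟨ε, hε, hc⟩ := hcond
      exact ⟨ε, hε, hc⟩)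
    have hBcond := regB_of_solve B hsol
    have : regModulus (fun x => {B x}) 0 0 ≤ (r : ENNReal) := iInf₂_le r hBcond
    exact absurd (lt_of_le_of_lt this hrB) (lt_irrefl _)
  have heq := le_antisymm hFB hBF
  refine ⟨heq, ?_, ?_⟩
  · intro hlt
    -- extract some κ with the F condition
    have hex : ∃ κ : ℝ≥0, ∃ ε > (0 : ℝ), ∀ x ∈ ball xbar ε, ∀ y ∈ ball (f xbar) ε,
        EMetric.infEdist x {x' | y ∈ ({f x'} : Set Y)}
          ≤ (κ : ENNReal) * EMetric.infEdist y {f x} := by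
      by_contra hno
      have hall : ∀ κ : ℝ≥0, ¬ (∃ ε > (0 : ℝ), ∀ x ∈ ball xbar ε, ∀ y ∈ ball (f xbar) ε,
          EMetric.infEdist x {x' | y ∈ ({f x'} : Set Y)}
            ≤ (κ : ENNReal) * EMetric.infEdist y {f x}) := fun κ hc => hno ⟨κ, hc⟩
      have htop : regModulus (fun x => {f x}) xbar (f xbar) = ⊤ := by
        unfold regModulus
        rw [iInf_eq_top]
        intro κ
        exact iInf_neg (hall κ)
      rw [htop] at hlt
      exact absurd hlt (lt_irrefl _)
    obtain ⟨κ, hcond⟩ := hex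
    have hsol := solve_of_regF f xbar B hf (lt_add_one κ) hcond
    intro y
    obtain ⟨u, hu, _⟩ := hsol y
    exact ⟨u, hu⟩
  · intro hsurj
    obtain ⟨C, hC, hsol⟩ := B.exists_preimage_norm_le hsurj
    have hsol' : ∀ y : Y, ∃ u : X, B u = y ∧ ‖u‖ ≤ ((C.toNNReal : ℝ≥0) : ℝ) * ‖y‖ := by
      intro y
      obtain ⟨u, hu1, hu2⟩ := hsol y
      exact ⟨u, hu1, by rwa [Real.coe_toNNReal _ hC.le]⟩
    have hBcond := regB_of_solve B hsol'
    have hle : regModulus (fun x => {B x}) 0 0 ≤ (C.toNNReal : ENNReal) :=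
      iInf₂_le C.toNNReal hBcond
    rw [heq]
    exact lt_of_le_of_lt hle (ENNReal.coe_lt_top)
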